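/- Iterative least-fixed-point saturation is correct: given a finite set A, an element x ∈ A, and a function step : A → Finset A, the worklist algorithm starting from waiting = {x}, actions = ∅, which repeatedly moves an element y from waiting to actions and adds step(y) \ actions to waiting, terminates and returns the smallest subset S ⊆ A with x ∈ S and (∀ y ∈ S, step(y) ⊆ S). -/

import Mathlib

/-- Correctness of the worklist saturation algorithm: starting from
`waiting = {x}`, `actions = ∅`, repeatedly moving an element `y` from
`waiting` to `actions` and adding `step y \ actions` to `waiting`, the
algorithm terminates and returns the least subset of `A` containing `x`
and closed under `step`. -/
theorem worklist_saturation_correct {α : Type*} [DecidableEq α]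
    (A : Finset α) (x : α) (hx : x ∈ A)
    (step : α → Finset α) (hstep : ∀ y ∈ A, step y ⊆ A)
    (actions waiting : ℕ → Finset α)
    (h0a : actions 0 = ∅) (h0w : waiting 0 = {x})
    (hrun : ∀ t, (waiting t).Nonempty → ∃ y ∈ waiting t,
      actions (t + 1) = insert y (actions t) ∧
      waiting (t + 1) = (waiting t).erase y ∪ (step y \ actions (t + 1)))
    (hstay : ∀ t, waiting t = ∅ →
      actions (t + 1) = actions t ∧ waiting (t + 1) = ∅) :
    ∃ T, waiting T = ∅ ∧ x ∈ actions T ∧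
      (∀ y ∈ actions T, step y ⊆ actions T) ∧
      ∀ S : Finset α, x ∈ S → (∀ y ∈ S, step y ⊆ S) → actions T ⊆ S := by
  -- Invariants
  have inv : ∀ t, actions t ⊆ A ∧ waiting t ⊆ A ∧ Disjoint (actions t) (waiting t) ∧
      x ∈ actions t ∪ waiting t ∧
      (∀ y ∈ actions t, step y ⊆ actions t ∪ waiting t) ∧
      (∀ S : Finset α, x ∈ S → (∀ y ∈ S, step y ⊆ S) → actions t ∪ waiting t ⊆ S) := by
    intro t
    induction t with
    | zero =>
      refine ⟨?_, ?_, ?_, ?_, ?_, ?_⟩ <;> simp [h0a, h0w]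
      · exact hx
      · intro S hxS _; simpa using hxS
    | succ t ih =>
      obtain ⟨hA, hW, hD, hxm, hcl, hmin⟩ := ih
      rcases (waiting t).eq_empty_or_nonempty with he | hne
      · obtain ⟨h1, h2⟩ := hstay t he
        rw [h1, h2]
        refine ⟨hA, by simp, by simp, ?_, ?_, ?_⟩
        · simpa [he] using hxm
        · intro y hy
          intro w hw
          have := hcl y hy hw
          simpa [he] using this
        · intro S hxS hSc
          intro w hw
          exact hmin S hxS hSc (by simpa [he] using hw)
      · obtain ⟨y, hy, ha, hw⟩ := hrun t hne
        have hyA : y ∈ A := hW hy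
        have hynot : y ∉ actions t := fun h => (Finset.disjoint_left.mp hD h) hy
        refine ⟨?_, ?_, ?_, ?_, ?_, ?_⟩
        · rw [ha]
          intro z hz
          rcases Finset.mem_insert.mp hz with rfl | hz
          · exact hyA
          · exact hA hz
        · rw [hw]
          intro z hz
          rcases Finset.mem_union.mp hz with hz | hz
          · exact hW (Finset.mem_of_mem_erase hz)
          · exact hstep y hyA (Finset.mem_sdiff.mp hz).1
        · rw [Finset.disjoint_left]
          intro z hz hz'
          rw [hw] at hz'
          rcases Finset.mem_union.mp hz' with hz' | hz'
          · rw [ha] at hz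
            rcases Finset.mem_insert.mp hz with rfl | hz
            · exact (Finset.mem_erase.mp hz').1 rfl
            · exact Finset.disjoint_left.mp hD hz (Finset.mem_of_mem_erase hz')
          · exact (Finset.mem_sdiff.mp hz').2 hz
        · rcases Finset.mem_union.mp hxm with hxa | hxw
          · exact Finset.mem_union_left _ (ha ▸ Finset.mem_insert_of_mem hxa)
          · by_cases hxy : x = y
            · exact Finset.mem_union_left _ (ha ▸ (hxy ▸ Finset.mem_insert_self _ _))
            · exact Finset.mem_union_right _
                (hw ▸ Finset.mem_union_left _ (Finset.mem_erase.mpr ⟨hxy, hxw⟩))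
        · intro z hz w hwm
          rw [ha] at hz
          have hwInA1 : w ∈ actions (t+1) ∨ w ∉ actions (t+1) := em _
          rcases Finset.mem_insert.mp hz with rfl | hz
          · rcases hwInA1 with h | h
            · exact Finset.mem_union_left _ h
            · exact Finset.mem_union_right _
                (hw ▸ Finset.mem_union_right _ (Finset.mem_sdiff.mpr ⟨hwm, h⟩))
          · have := hcl z hz hwm
            rcases Finset.mem_union.mp this with h | h
            · exact Finset.mem_union_left _ (ha ▸ Finset.mem_insert_of_mem h)
            · by_cases hwy : w = y
              · exact Finset.mem_union_left _ (ha ▸ (hwy ▸ Finset.mem_insert_self _ _))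
              · exact Finset.mem_union_right _
                  (hw ▸ Finset.mem_union_left _ (Finset.mem_erase.mpr ⟨hwy, h⟩))
        · intro S hxS hSc z hz
          have hsub := hmin S hxS hSc
          have hyS : y ∈ S := hsub (Finset.mem_union_right _ hy)
          rcases Finset.mem_union.mp hz with hz | hz
          · rw [ha] at hz
            rcases Finset.mem_insert.mp hz with rfl | hz
            · exact hyS
            · exact hsub (Finset.mem_union_left _ hz)
          · rw [hw] at hz
            rcases Finset.mem_union.mp hz with hz | hz
            · exact hsub (Finset.mem_union_right _ (Finset.mem_of_mem_erase hz))
            · exact hSc y hyS (Finset.mem_sdiff.mp hz).1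
  -- Termination via a decreasing measure
  set μ : ℕ → ℕ := fun t => (A.card - (actions t).card) * (A.card + 1) + (waiting t).card
    with hμ
  have hdec : ∀ t, (waiting t).Nonempty → μ (t + 1) < μ t := by
    intro t hne
    obtain ⟨hA, hW, hD, _, _, _⟩ := inv t
    obtain ⟨hA1, hW1, _, _, _, _⟩ := inv (t + 1)
    obtain ⟨y, hy, ha, _⟩ := hrun t hne
    have hynot : y ∉ actions t := fun h => (Finset.disjoint_left.mp hD h) hy
    have hcard1 : (actions (t+1)).card = (actions t).card + 1 := by
      rw [ha, Finset.card_insert_of_notMem hynot]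
    have h1 : (actions (t+1)).card ≤ A.card := Finset.card_le_card hA1
    have h2 : (waiting (t+1)).card ≤ A.card := Finset.card_le_card hW1
    have hAa : (actions t).card ≤ A.card := Finset.card_le_card hA
    simp only [hμ]
    have hk : A.card - (actions t).card = (A.card - (actions (t+1)).card) + 1 := by omega
    rw [hk, hcard1]
    set k := A.card - ((actions t).card + 1)
    have : k * (A.card + 1) + (waiting (t+1)).card < k * (A.card + 1) + (A.card + 1) := by
      omega
    calc k * (A.card + 1) + (waiting (t+1)).card
        < k * (A.card + 1) + (A.card + 1) := this
      _ = (k + 1) * (A.card + 1) := by ring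
      _ ≤ (k + 1) * (A.card + 1) + (waiting t).card := Nat.le_add_right _ _
  have hterm : ∃ T, waiting T = ∅ := by
    by_contra h
    push_neg at h
    have hne : ∀ t, (waiting t).Nonempty := fun t =>
      h t
    have key : ∀ t, μ t + t ≤ μ 0 := by
      intro t
      induction t with
      | zero => simp
      | succ t ih =>
        have := hdec t (hne t)
        omega
    have := key (μ 0 + 1)
    omega
  obtain ⟨T, hT⟩ := hterm
  obtain ⟨hA, hW, hD, hxm, hcl, hmin⟩ := inv T
  refine ⟨T, hT, ?_, ?_, ?_⟩
  · simpa [hT] using hxm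
  · intro y hy w hw
    have := hcl y hy hw
    simpa [hT] using this
  · intro S hxS hSc z hz
    exact hmin S hxS hSc (by simpa [hT] using hz)
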